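/- Let M be a real symmetric m×m matrix with strictly positive entries. Suppose for every vector y with strictly positive entries and every x, ⟨x, My⟩ = 0 implies ⟨x, Mx⟩ ≤ 0. Then for every y ≥ 0 with y ≠ 0 (not necessarily strictly positive) and every x, ⟨x, My⟩ = 0 implies ⟨x, Mx⟩ ≤ 0. -/

import Mathlib

open Matrix

/-- If for a symmetric positive matrix the implication `⟨x, My⟩ = 0 ⟹ ⟨x, Mx⟩ ≤ 0`
holds for all strictly positive `y`, then it also holds for all nonnegative nonzero `y`. -/
theorem stmt_19 (m : ℕ) (M : Matrix (Fin m) (Fin m) ℝ) (hM : M.IsHermitian)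
    (hpos : ∀ i j, 0 < M i j)
    (h : ∀ x y : Fin m → ℝ, (∀ i, 0 < y i) →
      x ⬝ᵥ M.mulVec y = 0 → x ⬝ᵥ M.mulVec x ≤ 0) :
    ∀ x y : Fin m → ℝ, (∀ i, 0 ≤ y i) → y ≠ 0 →
      x ⬝ᵥ M.mulVec y = 0 → x ⬝ᵥ M.mulVec x ≤ 0 := by
  intro x y hy hy0 hxy
  have hMT : Mᵀ = M := by simpa using hM.eq
  -- symmetry of the bilinear form
  have hsymm : ∀ u v : Fin m → ℝ, u ⬝ᵥ M.mulVec v = v ⬝ᵥ M.mulVec u := by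
    intro u v
    rw [dotProduct_mulVec, ← hMT, vecMul_transpose, dotProduct_comm, hMT]
  -- nonnegativity of the form on nonnegative vectors
  have hnn : ∀ u v : Fin m → ℝ, (∀ i, 0 ≤ u i) → (∀ i, 0 ≤ v i) →
      0 ≤ u ⬝ᵥ M.mulVec v := by
    intro u v hu hv
    simp only [dotProduct, mulVec]
    apply Finset.sum_nonneg
    intro i _
    exact mul_nonneg (hu i) (Finset.sum_nonneg fun j _ =>
      mul_nonneg (hpos i j).le (hv j))
  -- positivity of the form on nonzero nonnegative vectors
  obtain ⟨k, hk⟩ := Function.ne_iff.mp hy0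
  have hyk : 0 < y k := lt_of_le_of_ne (hy k) (Ne.symm hk)
  set one : Fin m → ℝ := fun _ => 1 with hone
  set a : ℝ := x ⬝ᵥ M.mulVec one with ha
  set b : ℝ := y ⬝ᵥ M.mulVec y with hb
  have hbpos : 0 < b := by
    rw [hb]
    simp only [dotProduct, mulVec]
    apply Finset.sum_pos' (fun i _ => mul_nonneg (hy i) (Finset.sum_nonneg
      fun j _ => mul_nonneg (hpos i j).le (hy j)))
    refine ⟨k, Finset.mem_univ k, mul_pos hyk ?_⟩
    apply Finset.sum_pos' (fun j _ => mul_nonneg (hpos k j).le (hy j))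
    exact ⟨k, Finset.mem_univ k, mul_pos (hpos k k) hyk⟩
  -- the key estimate for each ε > 0
  have key : ∀ ε : ℝ, 0 < ε →
      (x ⬝ᵥ M.mulVec x) * b ≤ ε ^ 2 * a ^ 2 ∨ x ⬝ᵥ M.mulVec x ≤ 0 := by
    intro ε hε
    set yε : Fin m → ℝ := y + ε • one with hyε
    have hyεpos : ∀ i, 0 < yε i := fun i => by
      simp only [hyε, Pi.add_apply, Pi.smul_apply, hone, smul_eq_mul, mul_one]
      exact add_pos_of_nonneg_of_pos (hy i) hε
    set s : ℝ := x ⬝ᵥ M.mulVec yε with hs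
    set d : ℝ := yε ⬝ᵥ M.mulVec yε with hd
    have hsval : s = ε * a := by
      rw [hs, hyε]
      simp only [mulVec_add, dotProduct_add, mulVec_smul, dotProduct_smul,
        smul_eq_mul, hxy, ha, zero_add]
    have hdge : b ≤ d := by
      have hexp : d = b + ε * (y ⬝ᵥ M.mulVec one) + ε * (one ⬝ᵥ M.mulVec y)
          + ε ^ 2 * (one ⬝ᵥ M.mulVec one) := by
        rw [hd, hyε, hb]
        simp only [mulVec_add, dotProduct_add, mulVec_smul, dotProduct_smul,
          add_dotProduct, smul_dotProduct, smul_eq_mul]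
        ring
      have h1 : 0 ≤ y ⬝ᵥ M.mulVec one := hnn y one hy (fun _ => zero_le_one)
      have h2 : 0 ≤ one ⬝ᵥ M.mulVec y := hnn one y (fun _ => zero_le_one) hy
      have h3 : 0 ≤ one ⬝ᵥ M.mulVec one :=
        hnn one one (fun _ => zero_le_one) (fun _ => zero_le_one)
      nlinarith [sq_nonneg ε]
    have hdpos : 0 < d := lt_of_lt_of_le hbpos hdge
    set c : ℝ := s / d with hc
    set xε : Fin m → ℝ := x - c • yε with hxε
    have horth : xε ⬝ᵥ M.mulVec yε = 0 := by
      rw [hxε]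
      simp only [sub_dotProduct, smul_dotProduct, smul_eq_mul, ← hs, ← hd, hc]
      field_simp
      ring
    have hq := h xε yε hyεpos horth
    have hexp2 : xε ⬝ᵥ M.mulVec xε
        = x ⬝ᵥ M.mulVec x - 2 * c * s + c ^ 2 * d := by
      rw [hxε]
      simp only [sub_dotProduct, dotProduct_sub, mulVec_sub, mulVec_smul,
        dotProduct_smul, smul_dotProduct, smul_eq_mul]
      rw [show yε ⬝ᵥ M.mulVec x = s from (hsymm x yε).symm, ← hs, ← hd]
      ring
    -- x⬝Mx ≤ s²/d
    have hmain : x ⬝ᵥ M.mulVec x ≤ s ^ 2 / d := by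
      have : x ⬝ᵥ M.mulVec x - 2 * c * s + c ^ 2 * d ≤ 0 := by
        rw [← hexp2]; exact hq
      rw [hc] at this
      have hdd : d ≠ 0 := ne_of_gt hdpos
      have heq : x ⬝ᵥ M.mulVec x - 2 * (s / d) * s + (s / d) ^ 2 * d
          = x ⬝ᵥ M.mulVec x - s ^ 2 / d := by
        field_simp
        ring
      rw [heq] at this
      linarith
    rcases le_or_gt (x ⬝ᵥ M.mulVec x) 0 with hle | hgt
    · exact Or.inr hle
    · left
      have h1 : (x ⬝ᵥ M.mulVec x) * d ≤ s ^ 2 := by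
        rw [← le_div_iff₀ hdpos]; exact hmain
      have h2 : (x ⬝ᵥ M.mulVec x) * b ≤ (x ⬝ᵥ M.mulVec x) * d :=
        mul_le_mul_of_nonneg_left hdge hgt.le
      calc (x ⬝ᵥ M.mulVec x) * b ≤ s ^ 2 := le_trans h2 h1
        _ = ε ^ 2 * a ^ 2 := by rw [hsval]; ring
  -- conclude
  by_contra hcon
  push_neg at hcon
  set p : ℝ := x ⬝ᵥ M.mulVec x with hp
  have hεpos : 0 < Real.sqrt (p * b / (2 * a ^ 2 + 2)) := by
    apply Real.sqrt_pos.mpr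
    positivity
  have hsq : Real.sqrt (p * b / (2 * a ^ 2 + 2)) ^ 2 = p * b / (2 * a ^ 2 + 2) := by
    rw [sq]
    exact Real.mul_self_sqrt (by positivity)
  rcases key _ hεpos with hk1 | hk2
  · rw [hsq] at hk1
    have ha2 : (0:ℝ) < 2 * a ^ 2 + 2 := by positivity
    rw [div_mul_eq_mul_div, le_div_iff₀ ha2] at hk1
    nlinarith [sq_nonneg a, mul_pos hcon hbpos]
  · linarith
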